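/- Let h ∈ ℂ with h ∉ 2πi·ℚ and q := exp(h). For ℓ = 1/2 and m₀ = 0, the generic Gelfand–Tsetlin representation V^{1/2}_{0} of U_q^{tw}(so₃) is irreducible: every ℂ-linear subspace of V = ⊕_{k∈ℤ} ℂ·e_k invariant under both I₂₁ and I₃₂ is either 0 or all of V. -/

import Mathlib

/-- `q^b := exp(h·b)`. -/
noncomputable def qpow (h b : ℂ) : ℂ := Complex.exp (h * b)

/-- the q-number `[b] := (q^b − q^{−b})/(q − q^{−1})` where `q = exp h`. -/
noncomputable def qnum (h b : ℂ) : ℂ :=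
  (Complex.exp (h * b) - Complex.exp (-(h * b))) / (Complex.exp h - Complex.exp (-h))

/-- The rationalized Gelfand–Tsetlin coefficient
`a_k = [ℓ+m₀+k+1][ℓ−m₀−k]/((q^{m₀+k}+q^{−(m₀+k)})(q^{m₀+k+1}+q^{−(m₀+k+1)}))`. -/
noncomputable def gtA (h ℓ m₀ : ℂ) (k : ℤ) : ℂ :=
  qnum h (ℓ + m₀ + k + 1) * qnum h (ℓ - m₀ - k) /
    ((qpow h (m₀ + k) + qpow h (-(m₀ + k))) *
      (qpow h (m₀ + k + 1) + qpow h (-(m₀ + k + 1))))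

section aux
variable (h : ℂ) (hh : ∀ r : ℚ, h ≠ 2 * Real.pi * Complex.I * r)

include hh in
lemma exp_ne_one (b : ℚ) (hb : b ≠ 0) : Complex.exp (h * b) ≠ 1 := by
  intro he
  rw [Complex.exp_eq_one_iff] at he
  obtain ⟨n, hn⟩ := he
  apply hh (n / b)
  have hb' : (b : ℂ) ≠ 0 := by exact_mod_cast hb
  push_cast
  field_simp at hn ⊢
  linear_combination hn

include hh in
lemma exp_ne_neg_one (b : ℚ) : Complex.exp (h * b) + 1 ≠ 0 := by
  rcases eq_or_ne b 0 with rfl | hb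
  · norm_num
  · intro he
    apply exp_ne_one h hh (2 * b) (by simpa using hb)
    have h1 : Complex.exp (h * b) = -1 := by linear_combination he
    calc Complex.exp (h * (2*b : ℚ)) = Complex.exp (h * b) * Complex.exp (h * b) := by
          rw [← Complex.exp_add]; push_cast; ring_nf
      _ = 1 := by rw [h1]; ring

include hh in
lemma qden_ne : Complex.exp h - Complex.exp (-h) ≠ 0 := by
  intro he
  apply exp_ne_one h hh 2 (by norm_num)
  have he' : Complex.exp h = Complex.exp (-h) := sub_eq_zero.mp he
  calc Complex.exp (h * (2:ℚ)) = Complex.exp h * Complex.exp h := by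
        rw [← Complex.exp_add]; push_cast; ring_nf
    _ = Complex.exp h * Complex.exp (-h) := by rw [← he']
    _ = 1 := by rw [← Complex.exp_add]; simp

include hh in
lemma qnum_ne (b : ℚ) (hb : b ≠ 0) : qnum h (b : ℂ) ≠ 0 := by
  unfold qnum
  apply div_ne_zero _ (qden_ne h hh)
  intro he
  apply exp_ne_one h hh (2 * b) (by simpa using hb)
  have he' : Complex.exp (h * b) = Complex.exp (-(h * b)) := sub_eq_zero.mp he
  calc Complex.exp (h * ((2*b : ℚ):ℂ)) = Complex.exp (h * b) * Complex.exp (h * b) := by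
        rw [← Complex.exp_add]; push_cast; ring_nf
    _ = Complex.exp (h * b) * Complex.exp (-(h*b)) := by rw [← he']
    _ = 1 := by rw [← Complex.exp_add]; simp

include hh in
lemma qpow_sum_ne (b : ℚ) : qpow h (b:ℂ) + qpow h (-(b:ℂ)) ≠ 0 := by
  unfold qpow
  intro he
  apply exp_ne_neg_one h hh (2 * b)
  have he' : Complex.exp (h * b) = - Complex.exp (h * -(b:ℂ)) := by linear_combination he
  have h2 : Complex.exp (h * ((2*b:ℚ):ℂ)) = Complex.exp (h * b) * Complex.exp (h * b) := by
    rw [← Complex.exp_add]; push_cast; ring_nf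
  rw [h2, he']
  have h3 : Complex.exp (h * -(b:ℂ)) * Complex.exp (h * b) = 1 := by
    rw [← Complex.exp_add]; ring_nf; exact Complex.exp_zero
  linear_combination Complex.exp (h * -(b:ℂ)) * he' - h3

include hh in
lemma qnum_inj (k k' : ℤ) (hk : k ≠ k') : qnum h (k:ℂ) ≠ qnum h (k':ℂ) := by
  intro he
  unfold qnum at he
  have hd := qden_ne h hh
  have hnum : Complex.exp (h * k) - Complex.exp (-(h * k))
      = Complex.exp (h * k') - Complex.exp (-(h * k')) := by
    field_simp at he; linear_combination he
  set A := Complex.exp (h * k) with hA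
  set B := Complex.exp (h * k') with hB
  have hAB : Complex.exp (-(h*k)) = A⁻¹ := by rw [hA, ← Complex.exp_neg]
  have hBB : Complex.exp (-(h*k')) = B⁻¹ := by rw [hB, ← Complex.exp_neg]
  have hA0 : A ≠ 0 := Complex.exp_ne_zero _
  have hB0 : B ≠ 0 := Complex.exp_ne_zero _
  rw [hAB, hBB] at hnum
  have key : (A - B) * (A * B + 1) = 0 := by
    have h4 : A - A⁻¹ - (B - B⁻¹) = 0 := by rw [hnum]; ring
    field_simp at h4
    linear_combination h4
  rcases mul_eq_zero.mp key with h1 | h2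
  · have hABeq : A = B := sub_eq_zero.mp h1
    apply exp_ne_one h hh ((k - k' : ℤ) : ℚ) (by exact_mod_cast sub_ne_zero.mpr hk)
    have h5 : Complex.exp (h * (((k - k' : ℤ):ℚ):ℂ)) = A * B⁻¹ := by
      rw [hA, hB, ← Complex.exp_neg, ← Complex.exp_add]; push_cast; ring_nf
    rw [h5, hABeq, mul_inv_cancel₀ hB0]
  · have hABm : A * B = Complex.exp (h * ((k + k' : ℤ):ℚ)) := by
      rw [hA, hB, ← Complex.exp_add]; push_cast; ring_nf
    rw [hABm] at h2
    exact exp_ne_neg_one h hh ((k + k' : ℤ):ℚ) h2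

end aux

section fs
variable (h : ℂ) (I21 : Module.End ℂ (ℤ →₀ ℂ))
  (hI21 : ∀ k : ℤ, I21 (Finsupp.single k 1) =
      (Complex.I * qnum h ((0 : ℂ) + k)) • Finsupp.single k 1)

include hI21 in
lemma I21_apply (v : ℤ →₀ ℂ) (m : ℤ) : I21 v m = Complex.I * qnum h (m:ℂ) * v m := by
  induction v using Finsupp.induction_linear with
  | zero => simp
  | add f g hf hg => rw [map_add, Finsupp.add_apply, hf, hg, Finsupp.add_apply]; ring
  | single a b =>
    have hs : Finsupp.single a b = b • Finsupp.single a (1:ℂ) := by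
      rw [Finsupp.smul_single, smul_eq_mul, mul_one]
    rw [hs, map_smul, hI21 a]
    rcases eq_or_ne m a with rfl | hma
    · simp [Finsupp.single_apply]; ring
    · simp [Finsupp.single_apply, Ne.symm hma]

variable (hh : ∀ r : ℚ, h ≠ 2 * Real.pi * Complex.I * r)
  (U : Submodule ℂ (ℤ →₀ ℂ)) (hU21 : ∀ v ∈ U, I21 v ∈ U)

include hI21 hh hU21 in
lemma extract : ∀ n : ℕ, ∀ v ∈ U, v.support.card ≤ n →
    ∀ k ∈ v.support, Finsupp.single k (1:ℂ) ∈ U := by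
  intro n
  induction n with
  | zero =>
    intro v _ hc k hk
    rw [Nat.le_zero, Finset.card_eq_zero] at hc
    simp [hc] at hk
  | succ n ih =>
    intro v hv hc k hk
    by_cases hsub : v.support ⊆ {k}
    · have hvk : v k ≠ 0 := Finsupp.mem_support_iff.mp hk
      have hveq : v = Finsupp.single k (v k) := by
        ext m
        rcases eq_or_ne m k with rfl | hmk
        · rw [Finsupp.single_apply, if_pos rfl]
        · rw [Finsupp.single_apply, if_neg (Ne.symm hmk)]
          by_contra hne
          exact hmk (Finset.mem_singleton.mp (hsub (Finsupp.mem_support_iff.mpr hne)))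
      have heq : (v k)⁻¹ • v = Finsupp.single k (1:ℂ) := by
        rw [hveq]
        simp only [Finsupp.single_eq_same, Finsupp.smul_single, smul_eq_mul,
          inv_mul_cancel₀ hvk]
      rw [← heq]
      exact U.smul_mem _ hv
    · obtain ⟨j, hj, hjk⟩ : ∃ j ∈ v.support, j ≠ k := by
        rcases Finset.not_subset.mp hsub with ⟨j, hj, hjn⟩
        exact ⟨j, hj, fun hje => hjn (by simp [hje])⟩
      set w := I21 v - (Complex.I * qnum h (j:ℂ)) • v with hw
      have hwU : w ∈ U := U.sub_mem (hU21 v hv) (U.smul_mem _ hv)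
      have hwapp : ∀ m : ℤ, w m = Complex.I * (qnum h (m:ℂ) - qnum h (j:ℂ)) * v m := by
        intro m
        rw [hw, Finsupp.sub_apply, Finsupp.smul_apply, I21_apply h I21 hI21, smul_eq_mul]
        ring
      have hwsub : w.support ⊆ v.support.erase j := by
        intro m hm
        rw [Finsupp.mem_support_iff, hwapp] at hm
        rcases eq_or_ne m j with rfl | hmj
        · simp at hm
        · refine Finset.mem_erase.mpr ⟨hmj, Finsupp.mem_support_iff.mpr ?_⟩
          intro h0; apply hm; rw [h0]; ring
      have hwc : w.support.card ≤ n := by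
        calc w.support.card ≤ (v.support.erase j).card := Finset.card_le_card hwsub
          _ = v.support.card - 1 := Finset.card_erase_of_mem hj
          _ ≤ n := by omega
      have hkw : k ∈ w.support := by
        rw [Finsupp.mem_support_iff, hwapp]
        exact mul_ne_zero (mul_ne_zero Complex.I_ne_zero
          (sub_ne_zero.mpr (qnum_inj h hh k j (Ne.symm hjk))))
          (Finsupp.mem_support_iff.mp hk)
      exact ih w hwU hwc k hkw

end fs

theorem stmt_18 (h : ℂ) (hh : ∀ r : ℚ, h ≠ 2 * Real.pi * Complex.I * r)
    (I21 I32 : Module.End ℂ (ℤ →₀ ℂ))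
    (hI21 : ∀ k : ℤ, I21 (Finsupp.single k 1) =
      (Complex.I * qnum h ((0 : ℂ) + k)) • Finsupp.single k 1)
    (hI32 : ∀ k : ℤ, I32 (Finsupp.single k 1) =
      gtA h (1 / 2 : ℂ) (0 : ℂ) k • Finsupp.single (k + 1) 1 - Finsupp.single (k - 1) 1)
    (U : Submodule ℂ (ℤ →₀ ℂ))
    (hU21 : ∀ v ∈ U, I21 v ∈ U) (hU32 : ∀ v ∈ U, I32 v ∈ U) :
    U = ⊥ ∨ U = ⊤ := by
  rcases eq_or_ne U ⊥ with hbot | hne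
  · exact Or.inl hbot
  right
  -- gtA is nonvanishing
  have hgtA : ∀ k : ℤ, gtA h (1 / 2 : ℂ) (0 : ℂ) k ≠ 0 := by
    intro k
    unfold gtA
    apply div_ne_zero
    · apply mul_ne_zero
      · have := qnum_ne h hh (1/2 + k + 1) (by
          intro h0
          have h1 : ((2*k + 3 : ℤ) : ℚ) = 0 := by push_cast; linarith
          have h2 : (2*k+3 : ℤ) = 0 := by exact_mod_cast h1
          omega)
        convert this using 2
        push_cast; ring
      · have := qnum_ne h hh (1/2 - k) (by
          intro h0
          have h1 : ((1 - 2*k : ℤ) : ℚ) = 0 := by push_cast; linarith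
          have h2 : (1 - 2*k : ℤ) = 0 := by exact_mod_cast h1
          omega)
        convert this using 2
        push_cast; ring
    · apply mul_ne_zero
      · have := qpow_sum_ne h hh (k : ℚ)
        convert this using 3 <;> push_cast <;> ring
      · have := qpow_sum_ne h hh ((k : ℚ) + 1)
        convert this using 3 <;> push_cast <;> ring
  -- extraction of basis vectors
  have hextract : ∀ v ∈ U, ∀ k ∈ v.support, Finsupp.single k (1:ℂ) ∈ U :=
    fun v hv k hk => extract h I21 hI21 hh U hU21 v.support.card v hv le_rfl k hk
  -- neighbor propagation
  have hstep : ∀ k : ℤ, Finsupp.single k (1:ℂ) ∈ U →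
      Finsupp.single (k+1) (1:ℂ) ∈ U ∧ Finsupp.single (k-1) (1:ℂ) ∈ U := by
    intro k hk
    have hw : I32 (Finsupp.single k 1) ∈ U := hU32 _ hk
    rw [hI32 k] at hw
    set w := gtA h (1 / 2 : ℂ) (0 : ℂ) k • Finsupp.single (k+1) (1:ℂ)
      - Finsupp.single (k-1) (1:ℂ) with hwdef
    have hne1 : (k:ℤ) + 1 ≠ k - 1 := by omega
    have hw1 : w (k+1) = gtA h (1 / 2 : ℂ) (0 : ℂ) k := by
      simp [hwdef, Finsupp.single_apply, hne1, Ne.symm hne1]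
    have hw2 : w (k-1) = -1 := by
      simp [hwdef, Finsupp.single_apply, hne1, Ne.symm hne1]
    constructor
    · exact hextract w hw (k+1) (Finsupp.mem_support_iff.mpr (by rw [hw1]; exact hgtA k))
    · exact hextract w hw (k-1) (Finsupp.mem_support_iff.mpr (by rw [hw2]; norm_num))
  -- get one basis vector
  obtain ⟨v, hv, hv0⟩ := Submodule.ne_bot_iff U |>.mp hne
  obtain ⟨k₀, hk₀⟩ := Finsupp.support_nonempty_iff.mpr hv0
  have hk₀U : Finsupp.single k₀ (1:ℂ) ∈ U := hextract v hv k₀ hk₀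
  -- all basis vectors
  have hall : ∀ m : ℤ, Finsupp.single m (1:ℂ) ∈ U := by
    have key : ∀ m : ℤ, Finsupp.single (k₀ + m) (1:ℂ) ∈ U := by
      intro m
      induction m using Int.induction_on with
      | zero => simpa using hk₀U
      | succ i ihi => have := (hstep _ ihi).1; convert this using 2; ring
      | pred i ihi => have := (hstep _ ihi).2; convert this using 2; ring
    intro m
    have := key (m - k₀); convert this using 2; ring
  -- conclude
  rw [Submodule.eq_top_iff']
  intro v
  induction v using Finsupp.induction_linear with
  | zero => exact U.zero_mem
  | add f g hf hg => exact U.add_mem hf hg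
  | single a b =>
    have : Finsupp.single a b = b • Finsupp.single a (1:ℂ) := by
      rw [Finsupp.smul_single, smul_eq_mul, mul_one]
    rw [this]
    exact U.smul_mem _ (hall a)
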